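/- The dual SDP (D) is strictly feasible: there exists a dual vector y with y_{ij} < 0 for all i ∈ {1,…,n}, j ∈ {l_i,…,u_i}, such that Q − 𝒜ᵀy is positive definite. -/

import Mathlib

noncomputable def A0mat (n : ℕ) : Matrix (Fin (n + 1)) (Fin (n + 1)) ℝ :=
  fun k m => if k = 0 ∧ m = 0 then 1 else 0

noncomputable def Aconstr (n : ℕ) (l u : Fin n → ℤ) (β : Fin n → ℤ → ℝ)
    (i : Fin n) (j : ℤ) : Matrix (Fin (n + 1)) (Fin (n + 1)) ℝ :=
  fun k m =>
    if k = 0 then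
      if m = 0 then
        (if j = u i then β i j + (l i : ℝ) * (u i : ℝ)
         else β i j - (j : ℝ) * ((j : ℝ) + 1))
      else if m = i.succ then
        (if j = u i then -((l i : ℝ) + (u i : ℝ)) / 2 else (j : ℝ) + 1 / 2)
      else 0
    else if k = i.succ then
      if m = 0 then
        (if j = u i then -((l i : ℝ) + (u i : ℝ)) / 2 else (j : ℝ) + 1 / 2)
      else if m = i.succ then (if j = u i then (1 : ℝ) else -1)
      else 0
    else 0

noncomputable def ATy (n : ℕ) (l u : Fin n → ℤ) (β : Fin n → ℤ → ℝ)
    (y0 : ℝ) (yv : Fin n → ℤ → ℝ) : Matrix (Fin (n + 1)) (Fin (n + 1)) ℝ :=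
  y0 • A0mat n + ∑ i : Fin n, ∑ j ∈ Finset.Icc (l i) (u i), yv i j • Aconstr n l u β i j

noncomputable def bdot (n : ℕ) (l u : Fin n → ℤ) (β : Fin n → ℤ → ℝ)
    (y0 : ℝ) (yv : Fin n → ℤ → ℝ) : ℝ :=
  y0 + ∑ i : Fin n, ∑ j ∈ Finset.Icc (l i) (u i), β i j * yv i j

open Matrix Finset

/-- coefficients of `Aconstr` -/
noncomputable def acoef {n : ℕ} (l u : Fin n → ℤ) (β : Fin n → ℤ → ℝ) (i : Fin n) (j : ℤ) : ℝ :=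
  if j = u i then β i j + (l i : ℝ) * (u i : ℝ) else β i j - (j : ℝ) * ((j : ℝ) + 1)

noncomputable def bcoef {n : ℕ} (l u : Fin n → ℤ) (i : Fin n) (j : ℤ) : ℝ :=
  if j = u i then -((l i : ℝ) + (u i : ℝ)) / 2 else (j : ℝ) + 1 / 2

noncomputable def dcoef {n : ℕ} (u : Fin n → ℤ) (i : Fin n) (j : ℤ) : ℝ :=
  if j = u i then (1 : ℝ) else -1

lemma sum_two {N : ℕ} (p q : Fin N) (hpq : p ≠ q) (f g : Fin N → ℝ) :
    (∑ m : Fin N, if m = p then f m else if m = q then g m else 0) = f p + g q := by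
  have h : ∀ m : Fin N, (if m = p then f m else if m = q then g m else 0)
      = (if m = p then f m else 0) + (if m = q then g m else 0) := by
    intro m
    by_cases h1 : m = p <;> by_cases h2 : m = q <;> simp_all
  rw [Finset.sum_congr rfl fun m _ => h m, Finset.sum_add_distrib,
    Finset.sum_ite_eq' Finset.univ p f, Finset.sum_ite_eq' Finset.univ q g]
  simp

lemma mulVec_sum' {m : Type*} [Fintype m] {ι : Type*} (s : Finset ι)
    (A : ι → Matrix m m ℝ) (x : m → ℝ) :
    (∑ i ∈ s, A i) *ᵥ x = ∑ i ∈ s, A i *ᵥ x := by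
  funext k
  simp only [Matrix.mulVec, dotProduct, Finset.sum_apply, Matrix.sum_apply,
    Finset.sum_mul]
  exact Finset.sum_comm

lemma dotProduct_sum' {m : Type*} [Fintype m] {ι : Type*} (s : Finset ι)
    (x : m → ℝ) (v : ι → m → ℝ) :
    x ⬝ᵥ (∑ i ∈ s, v i) = ∑ i ∈ s, x ⬝ᵥ v i := by
  simp only [dotProduct, Finset.sum_apply, Finset.mul_sum]
  exact Finset.sum_comm

lemma qf_two {N : ℕ} (a b d : ℝ) (s : Fin (N + 1)) (hs : s ≠ 0) (x : Fin (N + 1) → ℝ) :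
    x ⬝ᵥ ((fun k m => if k = 0 then (if m = 0 then a else if m = s then b else 0)
        else if k = s then (if m = 0 then b else if m = s then d else 0) else 0 :
        Matrix (Fin (N + 1)) (Fin (N + 1)) ℝ) *ᵥ x)
    = a * (x 0 * x 0) + (2 * b) * (x 0 * x s) + d * (x s * x s) := by
  have h0s : (0 : Fin (N + 1)) ≠ s := hs.symm
  have hrow : ((fun k m => if k = 0 then (if m = 0 then a else if m = s then b else 0)
        else if k = s then (if m = 0 then b else if m = s then d else 0) else 0 :
        Matrix (Fin (N + 1)) (Fin (N + 1)) ℝ) *ᵥ x)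
      = fun k => if k = 0 then a * x 0 + b * x s else if k = s then b * x 0 + d * x s else 0 := by
    funext k
    simp only [Matrix.mulVec, dotProduct]
    by_cases hk0 : k = 0
    · simp only [hk0, eq_self_iff_true, if_true]
      rw [Finset.sum_congr rfl (fun m _ =>
        (by split_ifs <;> ring :
          (if m = 0 then a else if m = s then b else 0) * x m
          = if m = 0 then a * x m else if m = s then b * x m else 0)),
        sum_two 0 s h0s]
    · by_cases hks : k = s
      · simp only [hks, if_neg hs, eq_self_iff_true, if_true]
        rw [Finset.sum_congr rfl (fun m _ =>
          (by split_ifs <;> ring :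
            (if m = 0 then b else if m = s then d else 0) * x m
            = if m = 0 then b * x m else if m = s then d * x m else 0)),
          sum_two 0 s h0s]
      · simp [hk0, hks]
  rw [hrow]
  show (∑ k, x k * _) = _
  rw [Finset.sum_congr rfl (fun k _ =>
    (by split_ifs <;> ring :
      x k * (if k = 0 then a * x 0 + b * x s else if k = s then b * x 0 + d * x s else 0)
      = if k = 0 then x k * (a * x 0 + b * x s)
        else if k = s then x k * (b * x 0 + d * x s) else 0)),
    sum_two 0 s h0s]
  ring

lemma qf_Aconstr {n : ℕ} (l u : Fin n → ℤ) (β : Fin n → ℤ → ℝ) (i : Fin n) (j : ℤ)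
    (x : Fin (n + 1) → ℝ) :
    x ⬝ᵥ (Aconstr n l u β i j *ᵥ x)
    = acoef l u β i j * (x 0 * x 0) + (2 * bcoef l u i j) * (x 0 * x i.succ)
      + dcoef u i j * (x i.succ * x i.succ) := by
  have : Aconstr n l u β i j
      = (fun k m => if k = 0 then (if m = 0 then acoef l u β i j
            else if m = i.succ then bcoef l u i j else 0)
          else if k = i.succ then (if m = 0 then bcoef l u i j
            else if m = i.succ then dcoef u i j else 0) else 0 :
          Matrix (Fin (n + 1)) (Fin (n + 1)) ℝ) := rfl
  rw [this, qf_two _ _ _ i.succ (Fin.succ_ne_zero i) x]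

lemma qf_A0 (N : ℕ) (x : Fin (N + 1) → ℝ) : x ⬝ᵥ (A0mat N *ᵥ x) = x 0 * x 0 := by
  have hrow : (A0mat N *ᵥ x) = fun k => if k = 0 then x 0 else 0 := by
    funext k
    simp only [Matrix.mulVec, dotProduct, A0mat]
    by_cases hk : k = 0 <;>
      simp [hk, ite_and, ite_mul, Finset.sum_ite_eq', Finset.mem_univ]
  rw [hrow]
  show (∑ k, x k * _) = _
  simp [mul_ite, mul_zero, Finset.sum_ite_eq', Finset.mem_univ]

lemma Aconstr_symm {n : ℕ} (l u : Fin n → ℤ) (β : Fin n → ℤ → ℝ) (i : Fin n) (j : ℤ)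
    (k m : Fin (n + 1)) :
    Aconstr n l u β i j k m = Aconstr n l u β i j m k := by
  unfold Aconstr
  rcases eq_or_ne k 0 with hk | hk <;> rcases eq_or_ne m 0 with hm | hm <;>
    rcases eq_or_ne k i.succ with hk2 | hk2 <;> rcases eq_or_ne m i.succ with hm2 | hm2 <;>
    simp_all

theorem stmt4 (n : ℕ) (hn : 1 ≤ n) (l u : Fin n → ℤ) (hlu : ∀ i, l i < u i)
    (β : Fin n → ℤ → ℝ) (Q : Matrix (Fin (n + 1)) (Fin (n + 1)) ℝ)
    (hQ : Q.IsHermitian) :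
    ∃ (y0 : ℝ) (yv : Fin n → ℤ → ℝ),
      (∀ i : Fin n, ∀ j ∈ Finset.Icc (l i) (u i), yv i j < 0) ∧
      (Q - ATy n l u β y0 yv).PosDef := by
  classical
  obtain ⟨c, hc⟩ : ∃ c : ℝ, c = ∑ k : Fin (n + 1), ∑ m : Fin (n + 1), |Q k m| := ⟨_, rfl⟩
  have hc0 : 0 ≤ c := by
    rw [hc]
    exact Finset.sum_nonneg fun _ _ => Finset.sum_nonneg fun _ _ => abs_nonneg _
  obtain ⟨t, ht⟩ : ∃ t : ℝ, t = 2 * c + 2 := ⟨_, rfl⟩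
  have ht0 : 0 < t := by rw [ht]; positivity
  obtain ⟨yv, hyv⟩ : ∃ yv : Fin n → ℤ → ℝ,
      yv = fun i j => if j = u i then -t * ((u i : ℝ) - (l i : ℝ) + 1) else -t := ⟨_, rfl⟩
  obtain ⟨C, hCdef⟩ : ∃ C : Fin n → ℝ,
      C = fun i => ∑ j ∈ Finset.Icc (l i) (u i), yv i j * (2 * bcoef l u i j) := ⟨_, rfl⟩
  obtain ⟨E, hEdef⟩ : ∃ E : ℝ,
      E = ∑ i : Fin n, ∑ j ∈ Finset.Icc (l i) (u i), yv i j * acoef l u β i j := ⟨_, rfl⟩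
  obtain ⟨K, hKdef⟩ : ∃ K : ℝ, K = c + 1 + ∑ i : Fin n, (C i) ^ 2 := ⟨_, rfl⟩
  refine ⟨-K - E, yv, ?_, ?_⟩
  · intro i j _
    have hlr : (l i : ℝ) < (u i : ℝ) := by exact_mod_cast hlu i
    by_cases h : j = u i
    · simp only [hyv, h, if_pos rfl]
      have : (0 : ℝ) < (u i : ℝ) - (l i : ℝ) + 1 := by linarith
      nlinarith
    · simp only [hyv, if_neg h]
      linarith
  · -- key sum computations
    have hdiag : ∀ i : Fin n, ∑ j ∈ Finset.Icc (l i) (u i), yv i j * dcoef u i j = -t := by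
      intro i
      rw [Finset.Icc_eq_cons_Ico (le_of_lt (hlu i)), Finset.sum_cons]
      have h1 : yv i (u i) * dcoef u i (u i) = -t * ((u i : ℝ) - (l i : ℝ) + 1) := by
        simp [hyv, dcoef]
      have h2 : ∑ j ∈ Finset.Ico (l i) (u i), yv i j * dcoef u i j
          = ((u i - l i).toNat : ℝ) * t := by
        rw [Finset.sum_congr rfl (fun j hj => ?_), Finset.sum_const, Int.card_Ico,
          nsmul_eq_mul]
        have hj' : j ≠ u i := ne_of_lt (Finset.mem_Ico.mp hj).2
        simp [hyv, dcoef, hj']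
      rw [h1, h2]
      have h3 : ((u i - l i).toNat : ℝ) = (u i : ℝ) - (l i : ℝ) := by
        have : (0 : ℤ) ≤ u i - l i := by have := hlu i; omega
        rw [show ((u i - l i).toNat : ℝ) = (((u i - l i).toNat : ℤ) : ℝ) by push_cast; ring,
          Int.toNat_of_nonneg this]
        push_cast
        ring
      rw [h3]
      ring
    refine Matrix.PosDef.of_dotProduct_mulVec_pos ?_ ?_
    · -- Hermitian
      have hA : (ATy n l u β (-K - E) yv).IsHermitian := by
        rw [Matrix.IsHermitian]
        ext k m
        simp only [Matrix.conjTranspose_apply, ATy, Matrix.add_apply, Matrix.smul_apply,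
          Matrix.sum_apply, A0mat, smul_eq_mul, star_trivial]
        rw [Finset.sum_congr rfl fun i _ => Finset.sum_congr rfl fun j _ => by
          rw [Aconstr_symm l u β i j m k]]
        congr 1
        congr 1
        simp [and_comm]
      exact Matrix.IsHermitian.sub hQ hA
    · intro x hx
      have hstar : star x = x := star_trivial x
      rw [hstar]
      -- quadratic form formula
      have hqf : x ⬝ᵥ ((Q - ATy n l u β (-K - E) yv) *ᵥ x)
          = x ⬝ᵥ (Q *ᵥ x) - (-K - E) * (x 0 * x 0)
            - ∑ i : Fin n, ∑ j ∈ Finset.Icc (l i) (u i),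
                yv i j * (x ⬝ᵥ (Aconstr n l u β i j *ᵥ x)) := by
        rw [Matrix.sub_mulVec, dotProduct_sub, ATy, Matrix.add_mulVec,
          dotProduct_add, Matrix.smul_mulVec, dotProduct_smul,
          mulVec_sum', dotProduct_sum']
        rw [Finset.sum_congr rfl fun i _ => by
          rw [mulVec_sum', dotProduct_sum',
            Finset.sum_congr rfl fun j _ => by
              rw [Matrix.smul_mulVec, dotProduct_smul, smul_eq_mul]]]
        rw [qf_A0, smul_eq_mul]
        ring
      have hinner : ∀ i : Fin n,
          ∑ j ∈ Finset.Icc (l i) (u i), yv i j * (x ⬝ᵥ (Aconstr n l u β i j *ᵥ x))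
          = (∑ j ∈ Finset.Icc (l i) (u i), yv i j * acoef l u β i j) * (x 0 * x 0)
            + C i * (x 0 * x i.succ) - t * (x i.succ * x i.succ) := by
        intro i
        rw [Finset.sum_congr rfl fun j _ => by
          rw [qf_Aconstr l u β i j x]]
        have expand : ∀ j ∈ Finset.Icc (l i) (u i),
            yv i j * (acoef l u β i j * (x 0 * x 0)
              + (2 * bcoef l u i j) * (x 0 * x i.succ)
              + dcoef u i j * (x i.succ * x i.succ))
            = yv i j * acoef l u β i j * (x 0 * x 0)
              + yv i j * (2 * bcoef l u i j) * (x 0 * x i.succ)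
              + yv i j * dcoef u i j * (x i.succ * x i.succ) := by
          intro j _
          ring
        rw [Finset.sum_congr rfl expand, Finset.sum_add_distrib, Finset.sum_add_distrib,
          ← Finset.sum_mul, ← Finset.sum_mul, ← Finset.sum_mul, hdiag i]
        simp only [hCdef]
        ring
      have hqf2 : x ⬝ᵥ ((Q - ATy n l u β (-K - E) yv) *ᵥ x)
          = x ⬝ᵥ (Q *ᵥ x) + K * (x 0 * x 0) - (∑ i : Fin n, C i * (x 0 * x i.succ))
            + t * (∑ i : Fin n, x i.succ * x i.succ) := by
        rw [hqf, Finset.sum_congr rfl fun i _ => hinner i]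
        rw [Finset.sum_sub_distrib, Finset.sum_add_distrib, ← Finset.sum_mul, ← hEdef,
          ← Finset.mul_sum]
        ring
      obtain ⟨S, hSdef⟩ : ∃ S : ℝ, S = ∑ k : Fin (n + 1), x k * x k := ⟨_, rfl⟩
      have hSk : ∀ k, x k * x k ≤ S := by
        intro k
        rw [hSdef]
        exact Finset.single_le_sum (fun r _ => mul_self_nonneg (x r)) (Finset.mem_univ k)
      have hS0 : 0 ≤ S := by
        rw [hSdef]
        exact Finset.sum_nonneg fun r _ => mul_self_nonneg (x r)
      have hQlow : -(c * S) ≤ x ⬝ᵥ (Q *ᵥ x) := by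
        have hexp : x ⬝ᵥ (Q *ᵥ x) = ∑ k : Fin (n + 1), ∑ m : Fin (n + 1),
            x k * (Q k m * x m) := by
          simp [dotProduct, Matrix.mulVec, Finset.mul_sum]
        rw [hexp]
        have hterm : ∀ k m : Fin (n + 1), -(|Q k m| * S) ≤ x k * (Q k m * x m) := by
          intro k m
          have habs : |x k * x m| ≤ S := by
            rw [abs_mul]
            nlinarith [abs_mul_abs_self (x k), abs_mul_abs_self (x m),
              sq_nonneg (|x k| - |x m|), hSk k, hSk m, abs_nonneg (x k), abs_nonneg (x m)]
          have h1 : -(|Q k m| * S) ≤ -(|Q k m| * |x k * x m|) := by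
            have := mul_le_mul_of_nonneg_left habs (abs_nonneg (Q k m))
            linarith
          have h2 : -(|Q k m| * |x k * x m|) ≤ Q k m * (x k * x m) := by
            rw [← abs_mul]
            exact neg_abs_le _
          have h3 : Q k m * (x k * x m) = x k * (Q k m * x m) := by ring
          linarith
        calc -(c * S) = ∑ k : Fin (n + 1), ∑ m : Fin (n + 1), -(|Q k m| * S) := by
              rw [hc]
              rw [Finset.sum_mul]
              rw [← Finset.sum_neg_distrib]
              refine Finset.sum_congr rfl fun k _ => ?_
              rw [Finset.sum_mul, ← Finset.sum_neg_distrib]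
          _ ≤ ∑ k : Fin (n + 1), ∑ m : Fin (n + 1), x k * (Q k m * x m) :=
              Finset.sum_le_sum fun k _ => Finset.sum_le_sum fun m _ => hterm k m
      have hcross : ∀ i : Fin n, C i * (x 0 * x i.succ)
          ≤ (t / 2) * (x i.succ * x i.succ) + (C i) ^ 2 * (x 0 * x 0) := by
        intro i
        have hX0 : (0:ℝ) ≤ x 0 * x 0 := mul_self_nonneg (x 0)
        have hsq : 0 ≤ (t * x i.succ - C i * x 0) ^ 2 := sq_nonneg _
        have ht2 : 2 ≤ t := by linarith
        have hCX : (0:ℝ) ≤ (C i) ^ 2 * (x 0 * x 0) := mul_nonneg (sq_nonneg _) hX0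
        nlinarith only [hsq, hCX, ht2, ht0, hX0]
      have hcrosssum : ∑ i : Fin n, C i * (x 0 * x i.succ)
          ≤ (t / 2) * (∑ i : Fin n, x i.succ * x i.succ)
            + (∑ i : Fin n, (C i) ^ 2) * (x 0 * x 0) := by
        calc ∑ i : Fin n, C i * (x 0 * x i.succ)
            ≤ ∑ i : Fin n, ((t / 2) * (x i.succ * x i.succ) + (C i) ^ 2 * (x 0 * x 0)) :=
              Finset.sum_le_sum fun i _ => hcross i
          _ = (t / 2) * (∑ i : Fin n, x i.succ * x i.succ)
              + (∑ i : Fin n, (C i) ^ 2) * (x 0 * x 0) := by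
              rw [Finset.sum_add_distrib, ← Finset.mul_sum, ← Finset.sum_mul]
      have hSsplit : S = x 0 * x 0 + ∑ i : Fin n, x i.succ * x i.succ := by
        rw [hSdef, Fin.sum_univ_succ]
      have hSpos : 0 < S := by
        obtain ⟨k, hk⟩ := Function.ne_iff.mp hx
        have : 0 < x k * x k := mul_self_pos.mpr hk
        exact lt_of_lt_of_le this (hSk k)
      rw [hqf2]
      have e1 : K * (x 0 * x 0) = (c + 1) * (x 0 * x 0)
          + (∑ i : Fin n, (C i) ^ 2) * (x 0 * x 0) := by rw [hKdef]; ring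
      have e2 : c * S = c * (x 0 * x 0) + c * ∑ i : Fin n, x i.succ * x i.succ := by
        rw [hSsplit]; ring
      have e3 : t / 2 * ∑ i : Fin n, x i.succ * x i.succ
          = (c + 1) * ∑ i : Fin n, x i.succ * x i.succ := by rw [ht]; ring
      have e4 : t * ∑ i : Fin n, x i.succ * x i.succ
          = (2 * c + 2) * ∑ i : Fin n, x i.succ * x i.succ := by rw [ht]
      linarith [hQlow, hcrosssum, hSsplit, hSpos, e1, e2, e3, e4]
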